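/- Let u ∈ ℝ^n and p ∈ (0,1). Let I_> = {i : u_i > Q_p(u)} and δ = (n − |I_>|)/n − p. Then the p-superquantile of u satisfies Q̄_p(u) = (1/(n(1−p))) Σ_{i ∈ I_>} u_i + (δ/(1−p)) Q_p(u). -/

import Mathlib

open Finset MeasureTheory

/-- Empirical `p`-quantile of `u ∈ ℝⁿ`:
`Q_p(u) = inf {t : #{i : u i ≤ t} ≥ p·n}`. -/
noncomputable def empQuantile {n : ℕ} (p : ℝ) (u : Fin n → ℝ) : ℝ :=
  sInf {t : ℝ | p * n ≤ ((Finset.univ.filter fun i => u i ≤ t).card : ℝ)}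

/-- Empirical `p`-superquantile of `u ∈ ℝⁿ`:
`Q̄_p(u) = (1/(1-p)) ∫_p^1 Q_s(u) ds`. -/
noncomputable def supQuantile {n : ℕ} (p : ℝ) (u : Fin n → ℝ) : ℝ :=
  (1 - p)⁻¹ * ∫ s in p..1, empQuantile s u

variable {n : ℕ}

lemma smul_le (s : ℝ) (hs1 : s ≤ 1) : s * (n:ℝ) ≤ n := by
  calc s * (n:ℝ) ≤ 1 * n := mul_le_mul_of_nonneg_right hs1 (Nat.cast_nonneg n)
    _ = n := one_mul _

lemma count_le_iff (v : Fin n → ℝ) (hv : Monotone v) (k : ℕ) (hk : k < n) (t : ℝ) :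
    k + 1 ≤ (univ.filter fun i => v i ≤ t).card ↔ v ⟨k, hk⟩ ≤ t := by
  constructor
  · intro h
    by_contra hlt
    push_neg at hlt
    have hsub : (univ.filter fun i => v i ≤ t) ⊆ Finset.Iio ⟨k, hk⟩ := by
      intro i hi
      simp only [mem_filter, mem_univ, true_and] at hi
      rw [Finset.mem_Iio]
      by_contra hle
      push_neg at hle
      exact absurd (hv hle) (by linarith)
    have := Finset.card_le_card hsub
    rw [Fin.card_Iio] at this
    simp only [Fin.val_mk] at this
    omega
  · intro h
    have hsub : Finset.Iic (⟨k, hk⟩ : Fin n) ⊆ (univ.filter fun i => v i ≤ t) := by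
      intro i hi
      rw [Finset.mem_Iic] at hi
      simp only [mem_filter, mem_univ, true_and]
      exact le_trans (hv hi) h
    have := Finset.card_le_card hsub
    rw [Fin.card_Iic] at this
    simpa using this

lemma card_comp (σ : Equiv.Perm (Fin n)) (P : ℝ → Prop) [DecidablePred P] (u : Fin n → ℝ) :
    (univ.filter fun i => P (u (σ i))).card = (univ.filter fun i => P (u i)).card := by
  apply Finset.card_bij' (fun i _ => σ i) (fun j _ => σ.symm j)
  · intro i hi; simp only [mem_filter, mem_univ, true_and] at hi ⊢; exact hi
  · intro j hj; simp only [mem_filter, mem_univ, true_and] at hj ⊢; simpa using hj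
  · intro i _; simp
  · intro j _; simp

lemma sum_comp' (σ : Equiv.Perm (Fin n)) (P : ℝ → Prop) [DecidablePred P] (u : Fin n → ℝ) :
    ∑ i ∈ univ.filter (fun i => P (u (σ i))), u (σ i)
      = ∑ i ∈ univ.filter (fun i => P (u i)), u i := by
  apply Finset.sum_bij' (fun i _ => σ i) (fun j _ => σ.symm j)
  · intro i hi; simp only [mem_filter, mem_univ, true_and] at hi ⊢; exact hi
  · intro j hj; simp only [mem_filter, mem_univ, true_and] at hj ⊢; simpa using hj
  · intro i _; simp
  · intro j _; simp
  · intro i _; rfl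

lemma empQuantile_eq (u : Fin n → ℝ) {s : ℝ} (hn : 1 ≤ n) (hs0 : 0 < s) (hs1 : s ≤ 1) :
    empQuantile s u = (u ∘ Tuple.sort u) ⟨⌈s * n⌉₊ - 1, by
      have h1 : 1 ≤ ⌈s * (n:ℝ)⌉₊ := Nat.one_le_ceil_iff.mpr (by positivity)
      have h2 : ⌈s * (n:ℝ)⌉₊ ≤ n := Nat.ceil_le.mpr (smul_le s hs1)
      omega⟩ := by
  set v : Fin n → ℝ := u ∘ Tuple.sort u with hv
  have hmono : Monotone v := Tuple.monotone_sort u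
  set k := ⌈s * (n:ℝ)⌉₊ with hkdef
  have h1 : 1 ≤ k := Nat.one_le_ceil_iff.mpr (by positivity)
  have h2 : k ≤ n := Nat.ceil_le.mpr (smul_le s hs1)
  have hlt : k - 1 < n := by omega
  have hset : {t : ℝ | s * ↑n ≤ ((univ.filter fun i => u i ≤ t).card : ℝ)}
      = Set.Ici (v ⟨k - 1, hlt⟩) := by
    ext t
    simp only [Set.mem_setOf_eq, Set.mem_Ici]
    have hcard : ((univ.filter fun i => u i ≤ t).card) = ((univ.filter fun i => v i ≤ t).card) :=
      (card_comp (Tuple.sort u) (fun x => x ≤ t) u).symm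
    rw [hcard, ← count_le_iff v hmono (k - 1) hlt t, show k - 1 + 1 = k by omega]
    constructor
    · intro h; exact Nat.ceil_le.mpr h
    · intro h
      calc s * ↑n ≤ (k : ℝ) := Nat.le_ceil _
        _ ≤ _ := by exact_mod_cast h
  rw [empQuantile, hset, csInf_Ici]

lemma const_piece (f : ℝ → ℝ) (a b c : ℝ) (hab : a ≤ b) (h : ∀ x ∈ Set.Ioc a b, f x = c) :
    IntervalIntegrable f volume a b ∧ ∫ x in a..b, f x = (b - a) * c := by
  constructor
  · rw [intervalIntegrable_iff, Set.uIoc_of_le hab]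
    exact ((integrableOn_const measure_Ioc_lt_top.ne).congr_fun
      (fun x hx => (h x hx).symm) measurableSet_Ioc)
  · have h2 : ∫ x in a..b, f x = ∫ x in a..b, c := by
      apply intervalIntegral.integral_congr_ae
      filter_upwards with x hx
      rw [Set.uIoc_of_le hab] at hx
      exact h x hx
    rw [h2, intervalIntegral.integral_const, smul_eq_mul]

lemma empQuantile_const (u : Fin n → ℝ) (hn : 1 ≤ n) (k : ℕ) (hk : k < n) {s : ℝ}
    (h1 : (k : ℝ) / n < s) (h2 : s ≤ ((k : ℝ) + 1) / n) :
    empQuantile s u = (u ∘ Tuple.sort u) ⟨k, hk⟩ := by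
  have hnpos : (0 : ℝ) < n := by exact_mod_cast Nat.pos_of_ne_zero (by omega)
  have hs0 : 0 < s := lt_of_le_of_lt (by positivity) h1
  have hs1 : s ≤ 1 := by
    apply h2.trans
    rw [div_le_one hnpos]
    exact_mod_cast Nat.succ_le_of_lt hk
  have hceil : ⌈s * (n : ℝ)⌉₊ = k + 1 := by
    rw [Nat.ceil_eq_iff (by omega)]
    constructor
    · push_cast
      calc (k : ℝ) = (k : ℝ)/n * n := by field_simp
        _ < s * n := by exact mul_lt_mul_of_pos_right h1 hnpos
    · push_cast
      calc s * (n:ℝ) ≤ ((k:ℝ)+1)/n * n := mul_le_mul_of_nonneg_right h2 (le_of_lt hnpos)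
        _ = (k:ℝ) + 1 := by field_simp
  rw [empQuantile_eq u hn hs0 hs1]
  congr 1
  simp [hceil]

lemma tail_integral (u : Fin n → ℝ) (hn : 1 ≤ n) : ∀ d : ℕ, d ≤ n →
    IntervalIntegrable (fun s => empQuantile s u) volume (((n - d : ℕ) : ℝ) / n) 1 ∧
    ∫ s in (((n - d : ℕ) : ℝ) / n)..1, empQuantile s u
      = (1 / n) * ∑ j ∈ univ.filter (fun j : Fin n => n - d ≤ (j : ℕ)), (u ∘ Tuple.sort u) j := by
  have hnpos : (0 : ℝ) < n := by exact_mod_cast Nat.pos_of_ne_zero (by omega)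
  intro d
  induction d with
  | zero =>
    intro _
    have he : ((n - 0 : ℕ) : ℝ) / n = 1 := by
      rw [Nat.sub_zero]; field_simp
    have hf : univ.filter (fun j : Fin n => n - 0 ≤ (j : ℕ)) = ∅ := by
      ext j; simp [Nat.sub_zero]
    rw [he, hf]
    refine ⟨IntervalIntegrable.refl, ?_⟩
    simp
  | succ d ih =>
    intro hd
    have ihd := ih (by omega)
    set k := n - (d + 1) with hkdef
    have hk : k < n := by omega
    have hcast : ((n - d : ℕ) : ℝ) = (k : ℝ) + 1 := by
      have : n - d = k + 1 := by omega
      rw [this]; push_cast; ring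
    have hab : (k : ℝ) / n ≤ ((k : ℝ) + 1) / n := by
      gcongr
      linarith
    obtain ⟨hInt1, hVal1⟩ := const_piece (fun s => empQuantile s u) ((k : ℝ) / n)
      (((k : ℝ) + 1) / n) ((u ∘ Tuple.sort u) ⟨k, hk⟩) hab
      (fun x hx => empQuantile_const u hn k hk hx.1 hx.2)
    rw [hcast] at ihd
    obtain ⟨hInt2, hVal2⟩ := ihd
    have hInt : IntervalIntegrable (fun s => empQuantile s u) volume ((k : ℝ) / n) 1 :=
      hInt1.trans hInt2
    refine ⟨hInt, ?_⟩
    have hsplit := intervalIntegral.integral_add_adjacent_intervals hInt1 hInt2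
    rw [← hsplit, hVal1, hVal2]
    have hfs : univ.filter (fun j : Fin n => k ≤ (j : ℕ))
        = insert (⟨k, hk⟩ : Fin n) (univ.filter fun j : Fin n => n - d ≤ (j : ℕ)) := by
      ext j
      simp only [mem_filter, mem_univ, true_and, mem_insert, Fin.ext_iff]
      omega
    rw [hfs, Finset.sum_insert (by simp; omega)]
    have hd1 : ((k : ℝ) + 1) / n - (k : ℝ) / n = 1 / n := by field_simp; ring
    rw [hd1]
    ring

lemma card_filter_Ico (a b : ℕ) (hb : b ≤ n) :
    (univ.filter fun j : Fin n => a ≤ (j : ℕ) ∧ (j : ℕ) < b).card = b - a := by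
  rw [← Nat.card_Ico a b]
  apply Finset.card_bij' (fun (j : Fin n) _ => (j : ℕ))
    (fun (x : ℕ) hx => (⟨x, lt_of_lt_of_le (Finset.mem_Ico.mp hx).2 hb⟩ : Fin n))
  case hi =>
    intro j hj; simp only [mem_filter, mem_univ, true_and] at hj
    rw [Finset.mem_Ico]; exact hj
  case hj =>
    intro x hx; simp only [mem_filter, mem_univ, true_and]
    exact Finset.mem_Ico.mp hx
  case left_inv => intro j _; rfl
  case right_inv => intro x _; rfl

/-- Discrete formula for the superquantile:
`Q̄_p(u) = (1/(n(1-p))) Σ_{i ∈ I_>} u_i + (δ/(1-p)) Q_p(u)` where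
`I_> = {i : u_i > Q_p(u)}` and `δ = (n - |I_>|)/n - p`. -/
theorem stmt2 {n : ℕ} (hn : 1 ≤ n) (u : Fin n → ℝ) (p : ℝ) (hp0 : 0 < p) (hp1 : p < 1) :
    supQuantile p u =
      (1 / ((n : ℝ) * (1 - p))) *
          ∑ i ∈ Finset.univ.filter (fun i => empQuantile p u < u i), u i +
        ((((n : ℝ) -
              ((Finset.univ.filter fun i => empQuantile p u < u i).card : ℝ)) / n - p) /
            (1 - p)) * empQuantile p u := by
  have hnR : (0 : ℝ) < n := by exact_mod_cast Nat.pos_of_ne_zero (by omega)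
  have hnne : (n : ℝ) ≠ 0 := ne_of_gt hnR
  have hp1' : (1 : ℝ) - p ≠ 0 := by linarith
  set v : Fin n → ℝ := u ∘ Tuple.sort u with hvdef
  have hmono : Monotone v := Tuple.monotone_sort u
  set k₀ := ⌈p * (n : ℝ)⌉₊ with hk0
  have h1 : 1 ≤ k₀ := Nat.one_le_ceil_iff.mpr (by positivity)
  have h2 : k₀ ≤ n := Nat.ceil_le.mpr (smul_le p hp1.le)
  have hq : empQuantile p u = v ⟨k₀ - 1, by omega⟩ := empQuantile_eq u hn hp0 hp1.le
  set q := empQuantile p u with hqdef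
  set m := (univ.filter fun i => u i ≤ q).card with hm
  have hcount_uv : ∀ t : ℝ, (univ.filter fun i => u i ≤ t).card
      = (univ.filter fun i => v i ≤ t).card :=
    fun t => (card_comp (Tuple.sort u) (fun x => x ≤ t) u).symm
  have hmn : m ≤ n := le_trans (Finset.card_filter_le _ _) (by simp)
  have hk0m : k₀ ≤ m := by
    have hvq : v ⟨k₀ - 1, by omega⟩ ≤ q := le_of_eq hq.symm
    have := (count_le_iff v hmono (k₀ - 1) (by omega) q).mpr hvq
    rw [← hcount_uv] at this
    omega
  have hviff : ∀ j : Fin n, v j ≤ q ↔ (j : ℕ) < m := by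
    intro j
    have := count_le_iff v hmono (j : ℕ) j.isLt q
    simp only [Fin.eta] at this
    rw [← this, hm, hcount_uv q]
    omega
  have hk0n : (k₀ : ℝ) / n ≤ 1 := by
    rw [div_le_one hnR]; exact_mod_cast h2
  have hple : p ≤ (k₀ : ℝ) / n := by
    rw [le_div_iff₀ hnR]; exact Nat.le_ceil _
  have heqon : ∀ x ∈ Set.Ioc p ((k₀ : ℝ) / n), empQuantile x u = q := by
    intro x hx
    have hx0 : 0 < x := hp0.trans hx.1
    have hx1 : x ≤ 1 := hx.2.trans hk0n
    have hceil : ⌈x * (n : ℝ)⌉₊ = k₀ := by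
      rw [Nat.ceil_eq_iff (by omega)]
      constructor
      · have hc : ((k₀ - 1 : ℕ) : ℝ) = (k₀ : ℝ) - 1 := by
          push_cast [Nat.cast_sub h1]; ring
        rw [hc]
        have hlt : (k₀ : ℝ) < p * n + 1 := by
          have := Nat.ceil_lt_add_one (show (0:ℝ) ≤ p * n by positivity)
          exact_mod_cast this
        nlinarith [hx.1]
      · calc x * (n : ℝ) ≤ (k₀ : ℝ) / n * n := mul_le_mul_of_nonneg_right hx.2 hnR.le
          _ = (k₀ : ℝ) := by field_simp
    rw [empQuantile_eq u hn hx0 hx1, hq]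
    congr 1
    simp [hceil]
  obtain ⟨hInt1, hVal1⟩ := const_piece (fun s => empQuantile s u) p ((k₀ : ℝ) / n) q hple heqon
  have tail := tail_integral u hn (n - k₀) (by omega)
  rw [show n - (n - k₀) = k₀ by omega] at tail
  obtain ⟨hInt2, hVal2⟩ := tail
  have hsplit := intervalIntegral.integral_add_adjacent_intervals hInt1 hInt2
  rw [supQuantile, ← hsplit, hVal1, hVal2, ← hvdef]
  -- rewrite the big sum
  have hset0 : univ.filter (fun j : Fin n => q < v j)
      = univ.filter (fun j : Fin n => m ≤ (j : ℕ)) := by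
    ext j
    simp only [mem_filter, mem_univ, true_and]
    rw [← not_le, hviff j, not_lt]
  have hset1 : univ.filter (fun j : Fin n => k₀ ≤ (j : ℕ))
      = (univ.filter fun j : Fin n => m ≤ (j : ℕ))
        ∪ (univ.filter fun j : Fin n => k₀ ≤ (j : ℕ) ∧ (j : ℕ) < m) := by
    ext j
    simp only [mem_filter, mem_univ, true_and, mem_union]
    omega
  have hdisj : Disjoint (univ.filter fun j : Fin n => m ≤ (j : ℕ))
      (univ.filter fun j : Fin n => k₀ ≤ (j : ℕ) ∧ (j : ℕ) < m) := by
    rw [Finset.disjoint_left]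
    intro j hj hj'
    simp only [mem_filter, mem_univ, true_and] at hj hj'
    omega
  have hmid : ∑ j ∈ univ.filter (fun j : Fin n => k₀ ≤ (j : ℕ) ∧ (j : ℕ) < m), v j
      = ((m - k₀ : ℕ) : ℝ) * q := by
    rw [Finset.sum_congr rfl (fun j hj => ?_), Finset.sum_const, card_filter_Ico k₀ m hmn,
      nsmul_eq_mul]
    simp only [mem_filter, mem_univ, true_and] at hj
    apply le_antisymm ((hviff j).mpr hj.2)
    rw [hq]
    exact hmono (show (⟨k₀ - 1, by omega⟩ : Fin n) ≤ j by
      rw [Fin.le_def]; simp; omega)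
  have hsum_uv : ∑ j ∈ univ.filter (fun j : Fin n => m ≤ (j : ℕ)), v j
      = ∑ i ∈ univ.filter (fun i => q < u i), u i := by
    rw [← hset0]
    exact sum_comp' (Tuple.sort u) (fun x => q < x) u
  have hsum : ∑ j ∈ univ.filter (fun j : Fin n => k₀ ≤ (j : ℕ)), v j
      = ∑ i ∈ univ.filter (fun i => q < u i), u i + ((m - k₀ : ℕ) : ℝ) * q := by
    rw [hset1, Finset.sum_union hdisj, hmid, hsum_uv]
  have hcard : ((univ.filter fun i => q < u i).card : ℕ) = n - m := by
    have hfn : univ.filter (fun i : Fin n => q < u i)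
        = univ \ univ.filter (fun i : Fin n => u i ≤ q) := by
      rw [← Finset.filter_not]
      congr 1
      ext i
      simp [not_le]
    rw [hfn, Finset.card_sdiff_of_subset (Finset.filter_subset _ _), ← hm]
    simp
  rw [hsum, hcard]
  have hc1 : ((m - k₀ : ℕ) : ℝ) = (m : ℝ) - (k₀ : ℝ) := by
    push_cast [Nat.cast_sub hk0m]; ring
  have hc2 : ((n - m : ℕ) : ℝ) = (n : ℝ) - (m : ℝ) := by
    push_cast [Nat.cast_sub hmn]; ring
  rw [hc1, hc2]
  field_simp
  ring
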